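/- The determinant of the Poisson-Gamma information matrix satisfies det(M) = (a/b)^p · det(M_Po) / (1 + (m/b)·e₁ᵀ M_Po e₁). -/

import Mathlib

open Matrix Real Finset

/-- The determinant of the Poisson-Gamma information matrix:
`det M = (a/b)^p · det M_Po / (1 + (m/b)·e₁ᵀ M_Po e₁)`. -/
theorem det_poisson_gamma_information
    (a b m : ℝ) (ha : 0 < a) (hb : 0 < b) (hm : 0 < m)
    (p : ℕ) (hp : 1 ≤ p)
    (e1 : Fin p → ℝ) (he1 : e1 = fun i : Fin p => if (i : ℕ) = 0 then (1:ℝ) else 0)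
    (MPo : Matrix (Fin p) (Fin p) ℝ) (hMPo : MPo.PosSemidef)
    (M : Matrix (Fin p) (Fin p) ℝ)
    (hM : M = (a / b) • (MPo -
      (e1 ⬝ᵥ (MPo *ᵥ e1) + b / m)⁻¹ •
        (MPo * Matrix.vecMulVec e1 e1 * MPo))) :
    M.det = (a / b) ^ p * MPo.det / (1 + (m / b) * (e1 ⬝ᵥ (MPo *ᵥ e1))) := by
  set s : ℝ := e1 ⬝ᵥ (MPo *ᵥ e1) with hs
  have hs0 : 0 ≤ s := by simpa using hMPo.dotProduct_mulVec_nonneg e1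
  have hc : s + b / m > 0 := by positivity
  set c : ℝ := s + b / m with hcdef
  -- factor M = (a/b) • (MPo * (1 + col (-(c⁻¹) • e1) * row (e1 ᵥ* MPo)))
  have hfac : M = (a / b) •
      (MPo * (1 + Matrix.replicateCol Unit (-(c⁻¹) • e1) * Matrix.replicateRow Unit (e1 ᵥ* MPo))) := by
    rw [hM]
    congr 1
    rw [Matrix.vecMulVec_eq Unit, Matrix.mul_add, Matrix.mul_one]
    rw [Matrix.replicateRow_vecMul]
    have : Matrix.replicateCol Unit (-(c⁻¹) • e1) = (-(c⁻¹)) • Matrix.replicateCol Unit e1 := by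
      ext i j; simp [Matrix.replicateCol]
    rw [this]
    simp only [Matrix.mul_smul, Matrix.smul_mul, neg_smul, Matrix.mul_assoc,
      sub_eq_add_neg, neg_smul, ← smul_neg, Matrix.neg_mul, Matrix.mul_neg]
  have hdet : M.det = (a / b) ^ p * (MPo.det * (1 + (e1 ᵥ* MPo) ⬝ᵥ (-(c⁻¹) • e1))) := by
    rw [hfac, Matrix.det_smul, Matrix.det_mul, Matrix.det_one_add_replicateCol_mul_replicateRow]
    simp
  rw [hdet]
  have hdd : (e1 ᵥ* MPo) ⬝ᵥ (-(c⁻¹) • e1) = -(c⁻¹) * s := by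
    rw [hs, dotProduct_mulVec]
    rw [dotProduct_smul]
    ring_nf
  rw [hdd]
  rw [hcdef]
  have h1 : 1 + m / b * s > 0 := by positivity
  field_simp
  ring
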